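/- Let Λ be a real vector space and S : (ℕ → Λ) → Λ an ℝ-linear map satisfying the unit and associativity axioms of an algebra over the coperad ℝ[X]. If x : ℕ → Λ is a sequence with x_i = ε(x_{i+1}) for every i ∈ ℕ, then x_0 = 0. -/
import Mathlib


/-- If `(Λ, S)` is an algebra over the coperad `ℝ[X]`
(`S` is ℝ-linear and satisfies the unit and associativity axioms),
`ε a = S (0, a, 0, 0, …)`, and `x : ℕ → Λ` is a sequence with
`x i = ε (x (i+1))` for all `i`, then `x 0 = 0`. -/
theorem eps_divisible_sequence_head_eq_zero
    (Λ : Type*) [AddCommGroup Λ] [Module ℝ Λ]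
    (S : (ℕ → Λ) →ₗ[ℝ] Λ)
    (hunit : ∀ a : Λ, S (fun n => if n = 0 then a else 0) = a)
    (hassoc : ∀ a : ℕ → ℕ → Λ,
      S (fun i => S (a i)) = S (fun n => ∑ p ∈ Finset.range (n + 1), a p (n - p)))
    (ε : Λ → Λ) (hε : ∀ x : Λ, ε x = S (fun n => if n = 1 then x else 0))
    (x : ℕ → Λ) (hx : ∀ i : ℕ, x i = ε (x (i + 1))) :
    x 0 = 0 := by
  have key : S (fun i => x i) = S (fun n => if n = 0 then 0 else x n) := by
    have h := hassoc (fun i j => if j = 1 then x (i + 1) else 0)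
    have hL : (fun i => S (fun j => if j = 1 then x (i + 1) else 0)) = fun i => x i := by
      funext i
      rw [← hε, ← hx]
    rw [hL] at h
    rw [h]
    congr 1
    funext n
    cases n with
    | zero => simp
    | succ m =>
      rw [Finset.sum_eq_single m]
      · have : m + 1 - m = 1 := by omega
        simp [this]
      · intro b hb hbm
        have hb' : b ≤ m + 1 := by
          simpa [Nat.lt_succ_iff] using Finset.mem_range.mp hb
        have : m + 1 - b ≠ 1 := by omega
        simp [this]
      · intro hm
        exact absurd (Finset.mem_range.mpr (by omega)) hm
  have hdecomp : (fun i => x i)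
      = (fun n => if n = 0 then x 0 else 0) + (fun n => if n = 0 then 0 else x n) := by
    funext n
    cases n <;> simp
  calc x 0 = S (fun n => if n = 0 then x 0 else 0) := (hunit _).symm
    _ = S (fun i => x i) - S (fun n => if n = 0 then 0 else x n) := by
        rw [hdecomp, map_add]; abel
    _ = 0 := by rw [key]; abel
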